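/- (Stability of the interval observer, discrete time.) Let A ∈ ℝ^{n×n}, C ∈ ℝ^{l×n}, let φ : ℝⁿ → ℝⁿ and ψ : ℝⁿ → ℝˡ have decomposition functions φ_d and ψ_d, and suppose there are entrywise nonnegative matrices F̄_φ ∈ ℝ^{n×n} and F̄_ψ ∈ ℝ^{l×n} such that for all x̲ ≤ x̄: φ_d(x̄,x̲) − φ_d(x̲,x̄) ≤ F̄_φ (x̄ − x̲) and ψ_d(x̄,x̲) − ψ_d(x̲,x̄) ≤ F̄_ψ (x̄ − x̲). Suppose there exist a symmetric positive definite P ∈ ℝ^{n×n}, X ∈ ℝ^{n×n} and J ∈ ℝ^{l×n} with J ≤ 0 entrywise, such that: the symmetric 2n×2n block matrix [[−P, Γ],[Γᵀ, P − X − Xᵀ]] is negative definite, where Γ := (|A|ᵀ + F̄_φᵀ) X − (|C|ᵀ + F̄_ψᵀ) J; Jᵀ C ≤ 0 entrywise; and −X is Metzler. Then X is invertible; set L := −(Xᵀ)⁻¹ Jᵀ. For every plant trajectory x_{t+1} = A x_t + φ(x_t), y_t = C x_t + ψ(x_t) and observer trajectories x̄_{t+1} = (A−LC)⁺ x̄_t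 − (A−LC)⁻ x̲_t + L y_t + φ_d(x̄_t, x̲_t) − L⁺ ψ_d(x̲_t, x̄_t) + L⁻ ψ_d(x̄_t, x̲_t), x̲_{t+1} = (A−LC)⁺ x̲_t − (A−LC)⁻ x̄_t + L y_t + φ_d(x̲_t, x̄_t) − L⁺ ψ_d(x̄_t, x̲_t) + L⁻ ψ_d(x̲_t, x̄_t) with x̲₀ ≤ x₀ ≤ x̄₀, the framer error ε_t := x̄_t − x̲_t converges to 0 as t → ∞. -/

import Mathlib

open Matrix

/-- Entrywise positive part `M⁺ = max(M,0)`. -/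
noncomputable def entPos {p n : ℕ} (M : Matrix (Fin p) (Fin n) ℝ) : Matrix (Fin p) (Fin n) ℝ :=
  Matrix.of fun i j => max (M i j) 0

/-- Entrywise negative part `M⁻ = M⁺ - M`. -/
noncomputable def entNeg {p n : ℕ} (M : Matrix (Fin p) (Fin n) ℝ) : Matrix (Fin p) (Fin n) ℝ :=
  entPos M - M

/-- Entrywise absolute value `|M| = M⁺ + M⁻`. -/
noncomputable def entAbs {p n : ℕ} (M : Matrix (Fin p) (Fin n) ℝ) : Matrix (Fin p) (Fin n) ℝ :=
  entPos M + entNeg M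

/-- `M^d`: the diagonal matrix with the same diagonal as `M`. -/
def diagPart {n : ℕ} (M : Matrix (Fin n) (Fin n) ℝ) : Matrix (Fin n) (Fin n) ℝ :=
  Matrix.diagonal fun i => M i i

/-- `M^{nd} = M - M^d`. -/
def offDiagPart {n : ℕ} (M : Matrix (Fin n) (Fin n) ℝ) : Matrix (Fin n) (Fin n) ℝ := M - diagPart M

/-- `M^m = M^d + |M^{nd}|`. -/
noncomputable def metzPart {n : ℕ} (M : Matrix (Fin n) (Fin n) ℝ) : Matrix (Fin n) (Fin n) ℝ :=
  diagPart M + entAbs (offDiagPart M)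

/-- A square real matrix is Metzler if all off-diagonal entries are nonnegative. -/
def Metzler {n : ℕ} (M : Matrix (Fin n) (Fin n) ℝ) : Prop := ∀ i j, i ≠ j → 0 ≤ M i j

/-- `gd` is a (discrete-time mixed-monotone) decomposition function of `g`. -/
def IsDecompositionFunction {n p : ℕ} (g : (Fin n → ℝ) → Fin p → ℝ)
    (gd : (Fin n → ℝ) → (Fin n → ℝ) → Fin p → ℝ) : Prop :=
  (∀ x, gd x x = g x) ∧
  (∀ x x' x₂, x ≤ x' → gd x x₂ ≤ gd x' x₂) ∧
  (∀ x x' x₁, x ≤ x' → gd x₁ x' ≤ gd x₁ x)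



section Helpers
variable {p n : ℕ}

lemma entPos_nonneg (M : Matrix (Fin p) (Fin n) ℝ) : ∀ i j, 0 ≤ entPos M i j :=
  fun _ _ => le_max_right _ _

lemma entNeg_nonneg (M : Matrix (Fin p) (Fin n) ℝ) : ∀ i j, 0 ≤ entNeg M i j := by
  intro i j
  simp only [entNeg, Matrix.sub_apply, entPos, Matrix.of_apply, sub_nonneg]
  exact le_max_left _ _

lemma entAbs_nonneg (M : Matrix (Fin p) (Fin n) ℝ) : ∀ i j, 0 ≤ entAbs M i j :=
  fun i j => add_nonneg (entPos_nonneg M i j) (entNeg_nonneg M i j)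

lemma entPos_sub_entNeg (M : Matrix (Fin p) (Fin n) ℝ) : entPos M - entNeg M = M := by
  ext i j; simp [entNeg]

lemma entAbs_apply (M : Matrix (Fin p) (Fin n) ℝ) (i : Fin p) (j : Fin n) :
    entAbs M i j = |M i j| := by
  simp only [entAbs, entNeg, Matrix.add_apply, Matrix.sub_apply, entPos, Matrix.of_apply]
  rcases le_total (M i j) 0 with h | h
  · rw [max_eq_right h, abs_of_nonpos h]; ring
  · rw [max_eq_left h, abs_of_nonneg h]; ring

lemma entPos_of_nonneg {M : Matrix (Fin p) (Fin n) ℝ} (h : ∀ i j, 0 ≤ M i j) :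
    entPos M = M := by
  ext i j; exact max_eq_left (h i j)

lemma entNeg_of_nonneg {M : Matrix (Fin p) (Fin n) ℝ} (h : ∀ i j, 0 ≤ M i j) :
    entNeg M = 0 := by
  simp [entNeg, entPos_of_nonneg h]

lemma dot_transpose_mulVec (M : Matrix (Fin n) (Fin n) ℝ) (v u : Fin n → ℝ) :
    v ⬝ᵥ Mᵀ *ᵥ u = (M *ᵥ v) ⬝ᵥ u := by
  rw [Matrix.mulVec_transpose, dotProduct_comm, ← Matrix.dotProduct_mulVec]
  exact dotProduct_comm _ _

lemma dot_transpose (M : Matrix (Fin n) (Fin n) ℝ) (v : Fin n → ℝ) :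
    v ⬝ᵥ Mᵀ *ᵥ v = v ⬝ᵥ M *ᵥ v := by
  rw [dot_transpose_mulVec]
  exact dotProduct_comm _ _

end Helpers

variable {p n : ℕ}

lemma mulVec_nonneg {M : Matrix (Fin p) (Fin n) ℝ} {v : Fin n → ℝ}
    (hM : ∀ i j, 0 ≤ M i j) (hv : 0 ≤ v) : 0 ≤ M *ᵥ v := fun i => by
  show (0:ℝ) ≤ _
  simpa [Matrix.mulVec, dotProduct] using
    Finset.sum_nonneg fun j _ => mul_nonneg (hM i j) (hv j)

lemma mulVec_mono {M : Matrix (Fin p) (Fin n) ℝ} {u v : Fin n → ℝ}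
    (hM : ∀ i j, 0 ≤ M i j) (huv : u ≤ v) : M *ᵥ u ≤ M *ᵥ v := by
  have := mulVec_nonneg hM (sub_nonneg.2 huv)
  rw [Matrix.mulVec_sub] at this
  intro i; have := this i; simp at this; linarith

lemma mulVec_le_mulVec_of_le {M N : Matrix (Fin p) (Fin n) ℝ} {v : Fin n → ℝ}
    (hMN : ∀ i j, M i j ≤ N i j) (hv : 0 ≤ v) : M *ᵥ v ≤ N *ᵥ v := fun i => by
  simpa [Matrix.mulVec, dotProduct] using
    Finset.sum_le_sum (s := Finset.univ) fun j _ => mul_le_mul_of_nonneg_right (hMN i j) (hv j)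

/-- Z-matrix with positive-definite symmetric part has "inverse positivity". -/
lemma zmat_sol_nonneg {X : Matrix (Fin n) (Fin n) ℝ}
    (hZ : ∀ i j, i ≠ j → X i j ≤ 0)
    (hpd : ∀ v : Fin n → ℝ, v ≠ 0 → 0 < v ⬝ᵥ X *ᵥ v)
    {u b : Fin n → ℝ} (hXu : X *ᵥ u = b) (hb : 0 ≤ b) : 0 ≤ u := by
  set w : Fin n → ℝ := fun i => max (-u i) 0 with hw
  have hw0 : 0 ≤ w := fun i => le_max_right _ _
  set up : Fin n → ℝ := fun i => max (u i) 0 with hup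
  have hup0 : 0 ≤ up := fun i => le_max_right _ _
  have hdecomp : up - u = w := by
    funext i; simp [hw, hup, max_def]; split_ifs <;> simp <;> linarith
  have hkey : w ⬝ᵥ X *ᵥ w ≤ 0 := by
    have h1 : w ⬝ᵥ X *ᵥ w = w ⬝ᵥ X *ᵥ up - w ⬝ᵥ b := by
      rw [← hXu, ← dotProduct_sub, ← Matrix.mulVec_sub, hdecomp]
    have h2 : w ⬝ᵥ X *ᵥ up ≤ 0 := by
      apply Finset.sum_nonpos
      intro i _
      simp only [Matrix.mulVec, dotProduct, Finset.mul_sum]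
      apply Finset.sum_nonpos
      intro j _
      rcases eq_or_ne i j with rfl | hij
      · rcases le_or_gt (u i) 0 with h | h
        · have : up i = 0 := by simp [hup, max_eq_right h]
          simp [this]
        · have : w i = 0 := by simp [hw]; linarith
          simp [this]
      · exact mul_nonpos_of_nonneg_of_nonpos (hw0 i)
          (mul_nonpos_of_nonpos_of_nonneg (hZ i j hij) (hup0 j))
    have h3 : 0 ≤ w ⬝ᵥ b := Finset.sum_nonneg fun i _ => mul_nonneg (hw0 i) (hb i)
    linarith
  have hw_eq : w = 0 := by
    by_contra hwne
    exact absurd (hpd w hwne) (not_lt.2 hkey)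
  intro i
  have hwi : w i = 0 := congrFun hw_eq i
  simp only [hw] at hwi
  by_contra hcon
  push_neg at hcon
  simp only [Pi.zero_apply] at hcon
  rw [max_eq_left (by linarith)] at hwi
  linarith

variable {n : ℕ}

lemma quad_continuous (P : Matrix (Fin n) (Fin n) ℝ) :
    Continuous fun v : Fin n → ℝ => v ⬝ᵥ P *ᵥ v := by
  simp only [dotProduct, Matrix.mulVec]
  apply continuous_finset_sum
  intro i _
  exact (continuous_apply i).mul
    (continuous_finset_sum _ fun j _ => continuous_const.mul (continuous_apply j))

lemma quad_smul (P : Matrix (Fin n) (Fin n) ℝ) (c : ℝ) (v : Fin n → ℝ) :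
    (c • v) ⬝ᵥ P *ᵥ (c • v) = c ^ 2 * (v ⬝ᵥ P *ᵥ v) := by
  rw [Matrix.mulVec_smul, dotProduct_smul, smul_dotProduct, smul_eq_mul,
    smul_eq_mul]
  ring

lemma pow_mulVec_tendsto_zero {P M : Matrix (Fin n) (Fin n) ℝ}
    (hq_pos : ∀ v : Fin n → ℝ, v ≠ 0 → 0 < v ⬝ᵥ P *ᵥ v)
    (hq_dec : ∀ v : Fin n → ℝ, v ≠ 0 → (M *ᵥ v) ⬝ᵥ P *ᵥ (M *ᵥ v) < v ⬝ᵥ P *ᵥ v)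
    (w : Fin n → ℝ) :
    Filter.Tendsto (fun t => (M ^ t) *ᵥ w) Filter.atTop (nhds 0) := by
  rcases Nat.eq_zero_or_pos n with hn | hn
  · subst hn
    have : (fun t => (M ^ t) *ᵥ w) = fun _ => 0 := by
      funext t; exact Subsingleton.elim _ _
    rw [this]; exact tendsto_const_nhds
  haveI : Nonempty (Fin n) := ⟨⟨0, hn⟩⟩
  set q : (Fin n → ℝ) → ℝ := fun v => v ⬝ᵥ P *ᵥ v with hqdef
  have hq0 : q 0 = 0 := by simp [hqdef]
  have hq_nonneg : ∀ v, 0 ≤ q v := by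
    intro v; rcases eq_or_ne v 0 with rfl | hv
    · simp [hq0]
    · exact (hq_pos v hv).le
  set g : (Fin n → ℝ) → ℝ := fun v => q v - q (M *ᵥ v) with hgdef
  have hqc : Continuous q := quad_continuous P
  have hMc : Continuous fun v : Fin n → ℝ => M *ᵥ v := by
    apply continuous_pi
    intro i
    simp only [Matrix.mulVec, dotProduct]
    exact continuous_finset_sum _ fun j _ => continuous_const.mul (continuous_apply j)
  have hgc : Continuous g := hqc.sub (hqc.comp hMc)
  set S : Set (Fin n → ℝ) := Metric.sphere 0 1 with hS
  have hScompact : IsCompact S := isCompact_sphere 0 1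
  have hSne : S.Nonempty := ⟨fun _ => 1, by simp [hS]⟩
  have hSnz : ∀ v ∈ S, v ≠ 0 := by
    intro v hv h0; rw [h0] at hv; simp [hS] at hv
  obtain ⟨va, hvaS, hva⟩ := hScompact.exists_isMinOn hSne hgc.continuousOn
  obtain ⟨vb, hvbS, hvb⟩ := hScompact.exists_isMaxOn hSne hqc.continuousOn
  obtain ⟨vm, hvmS, hvm⟩ := hScompact.exists_isMinOn hSne hqc.continuousOn
  set a := g va with ha
  set b := q vb with hb
  set m := q vm with hm
  have ha_pos : 0 < a := sub_pos.2 (hq_dec va (hSnz va hvaS))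
  have hb_pos : 0 < b := lt_of_lt_of_le (hq_pos vm (hSnz vm hvmS)) (hvb hvmS)
  have hm_pos : 0 < m := hq_pos vm (hSnz vm hvmS)
  set ρ : ℝ := max (1 - a / b) 0 with hρ
  have hρ0 : 0 ≤ ρ := le_max_right _ _
  have hρ1 : ρ < 1 := by
    apply max_lt _ one_pos
    have : 0 < a / b := div_pos ha_pos hb_pos
    linarith
  -- scaling decomposition
  have hscale : ∀ v : Fin n → ℝ, v ≠ 0 → ∃ c : ℝ, 0 < c ∧ ∃ u ∈ S, v = c • u ∧ ‖v‖ = c := by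
    intro v hv
    refine ⟨‖v‖, norm_pos_iff.2 hv, ‖v‖⁻¹ • v, ?_, ?_, rfl⟩
    · simp [hS, norm_smul, norm_ne_zero_iff.2 hv]
    · rw [smul_smul, mul_inv_cancel₀ (norm_ne_zero_iff.2 hv), one_smul]
  have hclaim1 : ∀ v, q (M *ᵥ v) ≤ ρ * q v := by
    intro v
    rcases eq_or_ne v 0 with rfl | hv
    · simp [hq0, hqdef]
    obtain ⟨c, hc, u, huS, huv, -⟩ := hscale v hv
    have hqv : q v = c ^ 2 * q u := by rw [huv]; exact quad_smul P _ u
    have hgv : g v = c ^ 2 * g u := by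
      simp only [hgdef]
      rw [huv, Matrix.mulVec_smul]
      simp only [hqdef]
      rw [quad_smul P _ u, quad_smul P _ (M *ᵥ u)]
      ring
    have hga : a ≤ g u := hva huS
    have hqb : q u ≤ b := hvb huS
    have hqu0 : 0 ≤ q u := hq_nonneg u
    have key : (a / b) * q v ≤ g v := by
      rw [hqv, hgv]
      have h1 : (a / b) * q u ≤ a := by
        rw [div_mul_eq_mul_div, mul_comm]
        rw [div_le_iff₀ hb_pos]
        exact mul_le_mul_of_nonneg_right hqb ha_pos.le |>.trans_eq (by ring) |>.trans_eq rfl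
      calc (a / b) * (c ^ 2 * q u) = c ^ 2 * ((a/b) * q u) := by ring
        _ ≤ c ^ 2 * a := by nlinarith
        _ ≤ c ^ 2 * g u := by nlinarith
    have : q (M *ᵥ v) = q v - g v := by simp [hgdef]
    rw [this]
    have hqv0 : 0 ≤ q v := hq_nonneg v
    have : (1 - a/b) * q v ≤ ρ * q v := mul_le_mul_of_nonneg_right (le_max_left _ _) hqv0
    linarith
  have hclaim2 : ∀ v : Fin n → ℝ, m * ‖v‖ ^ 2 ≤ q v := by
    intro v
    rcases eq_or_ne v 0 with rfl | hv
    · simp [hq0]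
    obtain ⟨c, hc, u, huS, huv, hnv⟩ := hscale v hv
    have hqv : q v = c ^ 2 * q u := by rw [huv]; exact quad_smul P _ u
    have hmu : m ≤ q u := hvm huS
    rw [hnv]
    nlinarith
  -- geometric decay of q along the trajectory
  have hiter : ∀ t, q ((M ^ t) *ᵥ w) ≤ ρ ^ t * q w := by
    intro t
    induction t with
    | zero => simp
    | succ t ih =>
      have : (M ^ (t+1)) *ᵥ w = M *ᵥ ((M ^ t) *ᵥ w) := by
        rw [pow_succ', Matrix.mulVec_mulVec]
      rw [this]
      calc q (M *ᵥ ((M ^ t) *ᵥ w)) ≤ ρ * q ((M ^ t) *ᵥ w) := hclaim1 _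
        _ ≤ ρ * (ρ ^ t * q w) := mul_le_mul_of_nonneg_left ih hρ0
        _ = ρ ^ (t+1) * q w := by ring
  -- conclude
  have hnorm2 : ∀ t, ‖(M ^ t) *ᵥ w‖ ^ 2 ≤ ρ ^ t * (q w / m) := by
    intro t
    have h1 := hclaim2 ((M ^ t) *ᵥ w)
    have h2 := hiter t
    rw [← mul_div_assoc, le_div_iff₀ hm_pos]
    nlinarith
  have hto0 : Filter.Tendsto (fun t => ρ ^ t * (q w / m)) Filter.atTop (nhds 0) := by
    simpa using (tendsto_pow_atTop_nhds_zero_of_lt_one hρ0 hρ1).mul_const (q w / m)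
  have hnormsq : Filter.Tendsto (fun t => ‖(M ^ t) *ᵥ w‖ ^ 2) Filter.atTop (nhds 0) :=
    squeeze_zero (fun t => sq_nonneg _) hnorm2 hto0
  have hnorm : Filter.Tendsto (fun t => ‖(M ^ t) *ᵥ w‖) Filter.atTop (nhds 0) := by
    have h := (Real.continuous_sqrt.tendsto 0).comp hnormsq
    rw [Function.comp_def, Real.sqrt_zero] at h
    have heq : (fun t => Real.sqrt (‖(M ^ t) *ᵥ w‖ ^ 2)) = fun t => ‖(M ^ t) *ᵥ w‖ := by
      funext t; exact Real.sqrt_sq (norm_nonneg _)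
    rwa [heq] at h
  rw [tendsto_zero_iff_norm_tendsto_zero]
  exact hnorm

/-- stability of the interval observer, discrete time. -/
theorem statement15 {n l : ℕ} (A : Matrix (Fin n) (Fin n) ℝ) (C : Matrix (Fin l) (Fin n) ℝ)
    (φ : (Fin n → ℝ) → Fin n → ℝ) (ψ : (Fin n → ℝ) → Fin l → ℝ)
    (φd : (Fin n → ℝ) → (Fin n → ℝ) → Fin n → ℝ)
    (ψd : (Fin n → ℝ) → (Fin n → ℝ) → Fin l → ℝ)
    (hφ : IsDecompositionFunction φ φd) (hψ : IsDecompositionFunction ψ ψd)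
    (Fφ : Matrix (Fin n) (Fin n) ℝ) (Fψ : Matrix (Fin l) (Fin n) ℝ)
    (hFφ0 : ∀ i j, 0 ≤ Fφ i j) (hFψ0 : ∀ i j, 0 ≤ Fψ i j)
    (hFφ : ∀ xlo xhi : Fin n → ℝ, xlo ≤ xhi →
      φd xhi xlo - φd xlo xhi ≤ Fφ.mulVec (xhi - xlo))
    (hFψ : ∀ xlo xhi : Fin n → ℝ, xlo ≤ xhi →
      ψd xhi xlo - ψd xlo xhi ≤ Fψ.mulVec (xhi - xlo))
    (P X : Matrix (Fin n) (Fin n) ℝ) (J : Matrix (Fin l) (Fin n) ℝ)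
    (hPsymm : P.IsSymm) (hP : P.PosDef)
    (hJ : ∀ i j, J i j ≤ 0)
    (Γ : Matrix (Fin n) (Fin n) ℝ)
    (hΓ : Γ = ((entAbs A)ᵀ + Fφᵀ) * X - ((entAbs C)ᵀ + Fψᵀ) * J)
    -- the block matrix [[−P, Γ],[Γᵀ, P − X − Xᵀ]] is negative definite
    (hLMI : (-(Matrix.fromBlocks (-P) Γ Γᵀ (P - X - Xᵀ))).PosDef)
    (hJC : ∀ i j, (Jᵀ * C) i j ≤ 0)
    (hXMetzler : Metzler (-X)) :
    -- X is invertible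
    IsUnit X.det ∧
    -- and the framer error converges to zero for the gain L = −(Xᵀ)⁻¹Jᵀ
    (∀ L : Matrix (Fin n) (Fin l) ℝ, L = -((Xᵀ)⁻¹ * Jᵀ) →
      ∀ (x xu xl : ℕ → Fin n → ℝ) (y : ℕ → Fin l → ℝ),
        (∀ t, x (t + 1) = A.mulVec (x t) + φ (x t)) →
        (∀ t, y t = C.mulVec (x t) + ψ (x t)) →
        (∀ t, xu (t + 1) =
          (entPos (A - L * C)).mulVec (xu t) - (entNeg (A - L * C)).mulVec (xl t)
            + L.mulVec (y t) + φd (xu t) (xl t)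
            - (entPos L).mulVec (ψd (xl t) (xu t)) + (entNeg L).mulVec (ψd (xu t) (xl t))) →
        (∀ t, xl (t + 1) =
          (entPos (A - L * C)).mulVec (xl t) - (entNeg (A - L * C)).mulVec (xu t)
            + L.mulVec (y t) + φd (xl t) (xu t)
            - (entPos L).mulVec (ψd (xu t) (xl t)) + (entNeg L).mulVec (ψd (xl t) (xu t))) →
        xl 0 ≤ x 0 → x 0 ≤ xu 0 →
        Filter.Tendsto (fun t => xu t - xl t) Filter.atTop (nhds 0)) := by
  have hq_pos : ∀ v : Fin n → ℝ, v ≠ 0 → 0 < v ⬝ᵥ P *ᵥ v := by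
    intro v hv
    simpa using hP.dotProduct_mulVec_pos hv
  set B := Matrix.fromBlocks (-P) Γ Γᵀ (P - X - Xᵀ) with hBdef
  have hLMIq : ∀ z : (Fin n ⊕ Fin n) → ℝ, z ≠ 0 → z ⬝ᵥ B *ᵥ z < 0 := by
    intro z hz
    have h := hLMI.dotProduct_mulVec_pos hz
    simp only [star_trivial, Matrix.neg_mulVec, dotProduct_neg] at h
    linarith
  have hBq : ∀ v w : Fin n → ℝ, Sum.elim v w ⬝ᵥ B *ᵥ Sum.elim v w =
      -(v ⬝ᵥ P *ᵥ v) + v ⬝ᵥ Γ *ᵥ w + w ⬝ᵥ Γᵀ *ᵥ v + w ⬝ᵥ (P - X - Xᵀ) *ᵥ w := by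
    intro v w
    rw [hBdef, Matrix.fromBlocks_mulVec, Sum.elim_comp_inl, Sum.elim_comp_inr,
      sumElim_dotProduct_sumElim, dotProduct_add, dotProduct_add,
      Matrix.neg_mulVec, dotProduct_neg]
    ring
  have hXq : ∀ v : Fin n → ℝ, v ≠ 0 → 0 < v ⬝ᵥ X *ᵥ v := by
    intro v hv
    have hz : Sum.elim (0 : Fin n → ℝ) v ≠ 0 := by
      intro h
      exact hv (funext fun i => congrFun h (Sum.inr i))
    have h1 := hLMIq _ hz
    rw [hBq 0 v] at h1
    simp only [zero_dotProduct, Matrix.mulVec_zero, dotProduct_zero, neg_zero, zero_add,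
      add_zero] at h1
    have h2 : v ⬝ᵥ (P - X - Xᵀ) *ᵥ v = v ⬝ᵥ P *ᵥ v - 2 * (v ⬝ᵥ X *ᵥ v) := by
      rw [Matrix.sub_mulVec, Matrix.sub_mulVec, dotProduct_sub, dotProduct_sub, dot_transpose]
      ring
    have h3 := hq_pos v hv
    rw [h2] at h1
    linarith
  have hdet : IsUnit X.det := by
    rw [isUnit_iff_ne_zero]
    intro h0
    obtain ⟨v, hv, hXv⟩ := (Matrix.exists_mulVec_eq_zero_iff).2 h0
    have h := hXq v hv
    rw [hXv] at h
    simp at h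
  refine ⟨hdet, ?_⟩
  have hZ : ∀ i j, i ≠ j → X i j ≤ 0 := by
    intro i j hij
    have h := hXMetzler i j hij
    simp only [Matrix.neg_apply] at h
    linarith
  have hXinv0 : ∀ i j, 0 ≤ X⁻¹ i j := by
    intro i j
    have hcol : X *ᵥ (X⁻¹ *ᵥ Pi.single j 1) = Pi.single j 1 := by
      rw [Matrix.mulVec_mulVec, Matrix.mul_nonsing_inv X hdet, Matrix.one_mulVec]
    have h0 : (0 : Fin n → ℝ) ≤ Pi.single j 1 := by
      intro k
      by_cases h : k = j <;> simp [Pi.single_apply, h]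
    have h := zmat_sol_nonneg hZ hXq hcol h0 i
    simpa [Matrix.mulVec, dotProduct, Pi.single_apply, mul_ite] using h
  intro L hL x xu xl y hx hy hxu hxl hxl0 hxu0
  have hL0 : ∀ i j, 0 ≤ L i j := by
    intro i j
    rw [hL]
    simp only [Matrix.neg_apply, Matrix.mul_apply, ← Matrix.transpose_nonsing_inv,
      Matrix.transpose_apply, neg_nonneg]
    exact Finset.sum_nonpos fun k _ =>
      mul_nonpos_of_nonneg_of_nonpos (hXinv0 k i) (hJ j k)
  have hJeq : J = -(Lᵀ * X) := by
    have h1 : Lᵀ = -(J * X⁻¹) := by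
      rw [hL, Matrix.transpose_neg, Matrix.transpose_mul, Matrix.transpose_transpose,
        ← Matrix.transpose_nonsing_inv, Matrix.transpose_transpose]
    rw [h1, Matrix.neg_mul, neg_neg, Matrix.nonsing_inv_mul_cancel_right _ _ hdet]
  set Pm := A - L * C with hPmdef
  set Mm := entAbs A + Fφ + L * (entAbs C + Fψ) with hMmdef
  have hM0 : ∀ i j, 0 ≤ Mm i j := by
    intro i j
    rw [hMmdef]
    simp only [Matrix.add_apply, Matrix.mul_apply]
    have h1 : 0 ≤ (L * (entAbs C + Fψ)) i j := by
      rw [Matrix.mul_apply]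
      exact Finset.sum_nonneg fun k _ => mul_nonneg (hL0 i k)
        (add_nonneg (entAbs_nonneg C k j) (hFψ0 k j))
    rw [Matrix.mul_apply] at h1
    have := entAbs_nonneg A i j
    have := hFφ0 i j
    simp only [Matrix.add_apply] at h1 ⊢
    linarith
  have hΓM : Γ = Mmᵀ * X := by
    rw [hΓ, hJeq, hMmdef]
    simp only [Matrix.transpose_add, Matrix.transpose_mul, Matrix.mul_neg, Matrix.neg_mul,
      sub_neg_eq_add, Matrix.add_mul, Matrix.mul_assoc]
  have hq_dec : ∀ v : Fin n → ℝ, v ≠ 0 →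
      (Mm *ᵥ v) ⬝ᵥ P *ᵥ (Mm *ᵥ v) < v ⬝ᵥ P *ᵥ v := by
    intro v hv
    set w := Mm *ᵥ v with hwdef
    have hz : Sum.elim v w ≠ 0 := fun h => hv (funext fun i => congrFun h (Sum.inl i))
    have h1 := hLMIq _ hz
    rw [hBq v w] at h1
    have hcross1 : v ⬝ᵥ Γ *ᵥ w = w ⬝ᵥ X *ᵥ w := by
      rw [hΓM, ← Matrix.mulVec_mulVec, dot_transpose_mulVec, ← hwdef]
    have hcross2 : w ⬝ᵥ Γᵀ *ᵥ v = w ⬝ᵥ X *ᵥ w := by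
      rw [hΓM, Matrix.transpose_mul, Matrix.transpose_transpose, ← Matrix.mulVec_mulVec,
        ← hwdef, dot_transpose]
    have hPXX : w ⬝ᵥ (P - X - Xᵀ) *ᵥ w = w ⬝ᵥ P *ᵥ w - 2 * (w ⬝ᵥ X *ᵥ w) := by
      rw [Matrix.sub_mulVec, Matrix.sub_mulVec, dotProduct_sub, dotProduct_sub, dot_transpose]
      ring
    rw [hcross1, hcross2, hPXX] at h1
    linarith
  -- framer property
  have hfr : ∀ t, xl t ≤ x t ∧ x t ≤ xu t := by
    intro t
    induction t with
    | zero => exact ⟨hxl0, hxu0⟩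
    | succ t ih =>
      obtain ⟨hl, hu⟩ := ih
      have hxs : x (t + 1) = Pm *ᵥ x t + (L * C) *ᵥ x t + φd (x t) (x t) := by
        rw [hx t, hφ.1]
        congr 1
        rw [← Matrix.add_mulVec, hPmdef, sub_add_cancel]
      have hyL : L *ᵥ y t = (L * C) *ᵥ x t + L *ᵥ ψd (x t) (x t) := by
        rw [hy t, Matrix.mulVec_add, Matrix.mulVec_mulVec, hψ.1]
      have e1 : Pm *ᵥ x t = entPos Pm *ᵥ x t - entNeg Pm *ᵥ x t := by
        rw [← Matrix.sub_mulVec, entPos_sub_entNeg]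
      have e2 : L *ᵥ ψd (x t) (x t) =
          entPos L *ᵥ ψd (x t) (x t) - entNeg L *ᵥ ψd (x t) (x t) := by
        rw [← Matrix.sub_mulVec, entPos_sub_entNeg]
      have hφ1 : φd (x t) (x t) ≤ φd (xu t) (xl t) :=
        le_trans (hφ.2.2 (xl t) (x t) (x t) hl) (hφ.2.1 (x t) (xu t) (xl t) hu)
      have hφ2 : φd (xl t) (xu t) ≤ φd (x t) (x t) :=
        le_trans (hφ.2.1 (xl t) (x t) (xu t) hl) (hφ.2.2 (x t) (xu t) (x t) hu)
      have hψ1 : ψd (x t) (x t) ≤ ψd (xu t) (xl t) :=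
        le_trans (hψ.2.2 (xl t) (x t) (x t) hl) (hψ.2.1 (x t) (xu t) (xl t) hu)
      have hψ2 : ψd (xl t) (xu t) ≤ ψd (x t) (x t) :=
        le_trans (hψ.2.1 (xl t) (x t) (xu t) hl) (hψ.2.2 (x t) (xu t) (x t) hu)
      constructor
      · -- xl (t+1) ≤ x (t+1)
        have idL : x (t + 1) - xl (t + 1) =
            entPos Pm *ᵥ (x t - xl t) + entNeg Pm *ᵥ (xu t - x t)
            + (φd (x t) (x t) - φd (xl t) (xu t))
            + (entPos L *ᵥ (ψd (xu t) (xl t) - ψd (x t) (x t))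
               + entNeg L *ᵥ (ψd (x t) (x t) - ψd (xl t) (xu t))) := by
          rw [hxl t, hxs, hyL, e1, e2]
          simp only [Matrix.mulVec_sub]
          abel
        have hnn : (0 : Fin n → ℝ) ≤ x (t + 1) - xl (t + 1) := by
          rw [idL]
          have h1 := mulVec_nonneg (entPos_nonneg Pm) (sub_nonneg.2 hl)
          have h2 := mulVec_nonneg (entNeg_nonneg Pm) (sub_nonneg.2 hu)
          have h3 : (0 : Fin n → ℝ) ≤ φd (x t) (x t) - φd (xl t) (xu t) := sub_nonneg.2 hφ2
          have h4 := mulVec_nonneg (entPos_nonneg L) (sub_nonneg.2 hψ1)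
          have h5 := mulVec_nonneg (entNeg_nonneg L) (sub_nonneg.2 hψ2)
          exact add_nonneg (add_nonneg (add_nonneg h1 h2) h3) (add_nonneg h4 h5)
        exact sub_nonneg.1 hnn
      · -- x (t+1) ≤ xu (t+1)
        have idU : xu (t + 1) - x (t + 1) =
            entPos Pm *ᵥ (xu t - x t) + entNeg Pm *ᵥ (x t - xl t)
            + (φd (xu t) (xl t) - φd (x t) (x t))
            + (entPos L *ᵥ (ψd (x t) (x t) - ψd (xl t) (xu t))
               + entNeg L *ᵥ (ψd (xu t) (xl t) - ψd (x t) (x t))) := by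
          rw [hxu t, hxs, hyL, e1, e2]
          simp only [Matrix.mulVec_sub]
          abel
        have hnn : (0 : Fin n → ℝ) ≤ xu (t + 1) - x (t + 1) := by
          rw [idU]
          have h1 := mulVec_nonneg (entPos_nonneg Pm) (sub_nonneg.2 hu)
          have h2 := mulVec_nonneg (entNeg_nonneg Pm) (sub_nonneg.2 hl)
          have h3 : (0 : Fin n → ℝ) ≤ φd (xu t) (xl t) - φd (x t) (x t) := sub_nonneg.2 hφ1
          have h4 := mulVec_nonneg (entPos_nonneg L) (sub_nonneg.2 hψ2)
          have h5 := mulVec_nonneg (entNeg_nonneg L) (sub_nonneg.2 hψ1)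
          exact add_nonneg (add_nonneg (add_nonneg h1 h2) h3) (add_nonneg h4 h5)
        exact sub_nonneg.1 hnn
  -- error recursion bound
  have hεb : ∀ t, xu (t + 1) - xl (t + 1) ≤ Mm *ᵥ (xu t - xl t) := by
    intro t
    obtain ⟨hl, hu⟩ := hfr t
    have hlu : xl t ≤ xu t := hl.trans hu
    have hε0 : (0 : Fin n → ℝ) ≤ xu t - xl t := sub_nonneg.2 hlu
    have hεid : xu (t + 1) - xl (t + 1) =
        entPos Pm *ᵥ (xu t - xl t) + entNeg Pm *ᵥ (xu t - xl t)
        + (φd (xu t) (xl t) - φd (xl t) (xu t))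
        + L *ᵥ (ψd (xu t) (xl t) - ψd (xl t) (xu t)) := by
      have e2 : L *ᵥ (ψd (xu t) (xl t) - ψd (xl t) (xu t)) =
          entPos L *ᵥ (ψd (xu t) (xl t) - ψd (xl t) (xu t))
          + entNeg L *ᵥ (ψd (xu t) (xl t) - ψd (xl t) (xu t)) := by
        rw [entPos_of_nonneg hL0, entNeg_of_nonneg hL0, Matrix.zero_mulVec, add_zero]
      rw [hxu t, hxl t, e2]
      simp only [Matrix.mulVec_sub]
      abel
    rw [hεid]
    have hA : entPos Pm *ᵥ (xu t - xl t) + entNeg Pm *ᵥ (xu t - xl t)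
        ≤ (entAbs A + L * entAbs C) *ᵥ (xu t - xl t) := by
      rw [← Matrix.add_mulVec]
      apply mulVec_le_mulVec_of_le _ hε0
      intro i j
      have habs : (entPos Pm + entNeg Pm) i j = |Pm i j| := by
        rw [← entAbs_apply]
        rfl
      rw [habs, hPmdef]
      simp only [Matrix.sub_apply, Matrix.add_apply]
      have hLC : |(L * C) i j| ≤ (L * entAbs C) i j := by
        simp only [Matrix.mul_apply]
        refine le_trans (Finset.abs_sum_le_sum_abs _ _) (Finset.sum_le_sum fun k _ => ?_)
        rw [abs_mul, abs_of_nonneg (hL0 i k), entAbs_apply]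
      calc |A i j - (L * C) i j| ≤ |A i j| + |(L * C) i j| := abs_sub _ _
        _ ≤ entAbs A i j + (L * entAbs C) i j := by
            rw [entAbs_apply]
            linarith
    have hφb : φd (xu t) (xl t) - φd (xl t) (xu t) ≤ Fφ *ᵥ (xu t - xl t) := hFφ _ _ hlu
    have hψb : L *ᵥ (ψd (xu t) (xl t) - ψd (xl t) (xu t)) ≤ (L * Fψ) *ᵥ (xu t - xl t) := by
      rw [← Matrix.mulVec_mulVec]
      exact mulVec_mono hL0 (hFψ _ _ hlu)
    have hsum := add_le_add (add_le_add hA hφb) hψb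
    refine le_trans hsum (le_of_eq ?_)
    have heq : (entAbs A + L * entAbs C) + Fφ + L * Fψ = Mm := by
      rw [hMmdef, Matrix.mul_add]
      abel
    rw [← heq]
    simp only [Matrix.add_mulVec]
  have hεpow : ∀ t, xu t - xl t ≤ (Mm ^ t) *ᵥ (xu 0 - xl 0) := by
    intro t
    induction t with
    | zero => simp [Matrix.one_mulVec]
    | succ t ih =>
      refine le_trans (hεb t) ?_
      have h := mulVec_mono hM0 ih
      rw [Matrix.mulVec_mulVec] at h
      rwa [pow_succ']
  have hεnn : ∀ t, (0 : Fin n → ℝ) ≤ xu t - xl t :=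
    fun t => sub_nonneg.2 ((hfr t).1.trans (hfr t).2)
  have hconv := pow_mulVec_tendsto_zero hq_pos hq_dec (xu 0 - xl 0)
  rw [tendsto_pi_nhds]
  intro i
  have hcomp : Filter.Tendsto (fun t => ((Mm ^ t) *ᵥ (xu 0 - xl 0)) i)
      Filter.atTop (nhds 0) := by
    have h := (tendsto_pi_nhds.1 hconv) i
    simpa using h
  have : Filter.Tendsto (fun t => (xu t - xl t) i) Filter.atTop (nhds 0) :=
    squeeze_zero (fun t => hεnn t i) (fun t => hεpow t i) hcomp
  simpa using this
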